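/- arXiv:1102.2932 — 6 statements merged into one kernel-verified Lean document; each statement's English description precedes it below -/
import Mathlib

section
/- Let a_1, …, a_n be n ≥ 3 distinct real numbers and let M be the n×n matrix with M_{ij} = (a_j − a_i)^2. Then rk(M) = 3. -/
lemma rank_submatrix_le_rank {n m : ℕ} (M : Matrix (Fin n) (Fin n) ℝ)
    (g : Fin m → Fin n) : (M.submatrix g g).rank ≤ M.rank := by
  set P : Matrix (Fin m) (Fin n) ℝ := Matrix.of fun i k => if g i = k then 1 else 0
  set Q : Matrix (Fin n) (Fin m) ℝ := Matrix.of fun k j => if k = g j then 1 else 0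
  have h : M.submatrix g g = P * M * Q := by
    ext i j
    simp [P, Q, Matrix.mul_apply, Finset.sum_ite_eq, Finset.sum_ite_eq']
  rw [h]
  exact (Matrix.rank_mul_le_left _ _).trans (Matrix.rank_mul_le_right _ _)

/-- For n ≥ 3 distinct reals a₁,…,aₙ, the matrix M with Mᵢⱼ = (aⱼ - aᵢ)² has rank 3. -/
theorem euclidean_distance_matrix_rank {n : ℕ} (hn : 3 ≤ n)
    (a : Fin n → ℝ) (ha : Function.Injective a)
    (M : Matrix (Fin n) (Fin n) ℝ) (hM : ∀ i j, M i j = (a j - a i) ^ 2) :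
    M.rank = 3 := by
  -- Upper bound : M = A * B with inner dimension 3
  have hub : M.rank ≤ 3 := by
    set A : Matrix (Fin n) (Fin 3) ℝ := Matrix.of fun i k => ![1, a i, (a i)^2] k
    set B : Matrix (Fin 3) (Fin n) ℝ := Matrix.of fun k j => ![(a j)^2, -2 * a j, 1] k
    have h : M = A * B := by
      ext i j
      rw [hM, Matrix.mul_apply]
      simp [A, B, Fin.sum_univ_three]
      ring
    rw [h]
    exact (Matrix.rank_mul_le_right _ _).trans (Matrix.rank_le_height B)
  -- Lower bound : a 3×3 submatrix with nonzero determinant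
  have hlb : 3 ≤ M.rank := by
    set g : Fin 3 → Fin n := Fin.castLE hn
    have hg : Function.Injective g := Fin.castLE_injective hn
    set N := M.submatrix g g
    have hdet : N.det ≠ 0 := by
      have hN : N.det = 2 * (a (g 0) - a (g 1))^2 * (a (g 1) - a (g 2))^2 *
          (a (g 2) - a (g 0))^2 := by
        rw [Matrix.det_fin_three]
        simp only [N, Matrix.submatrix_apply, hM]
        ring
      rw [hN]
      have h01 : a (g 0) - a (g 1) ≠ 0 := sub_ne_zero.mpr (fun h => by
        have := ha h; simp [g, Fin.ext_iff] at this)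
      have h12 : a (g 1) - a (g 2) ≠ 0 := sub_ne_zero.mpr (fun h => by
        have := ha h; simp [g, Fin.ext_iff] at this)
      have h20 : a (g 2) - a (g 0) ≠ 0 := sub_ne_zero.mpr (fun h => by
        have := ha h; simp [g, Fin.ext_iff] at this)
      positivity
    have hNrank : N.rank = 3 := by
      have := Matrix.rank_of_isUnit N ((Matrix.isUnit_iff_isUnit_det N).mpr
        (isUnit_iff_ne_zero.mpr hdet))
      simpa using this
    calc 3 = N.rank := hNrank.symm
      _ ≤ M.rank := rank_submatrix_le_rank M g
  omega
end

section
/- Let a_1, …, a_n be distinct real numbers and M the n×n matrix with M_{ij} = (a_j − a_i)^2. Then the nonnegative rank of M is at least log₂ n. -/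
/-- The nonnegative (monotone) rank of a matrix over ℝ. -/
noncomputable def mrank {S T : Type*} [Fintype S] [Fintype T] (M : Matrix S T ℝ) : ℕ :=
  sInf {r : ℕ | ∃ u : Fin r → S → ℝ, ∃ v : Fin r → T → ℝ,
    (∀ k s, 0 ≤ u k s) ∧ (∀ k t, 0 ≤ v k t) ∧ ∀ s t, M s t = ∑ k, u k s * v k t}

/-- For distinct reals a₁,…,aₙ, the matrix M with Mᵢⱼ = (aⱼ - aᵢ)² has
nonnegative rank at least log₂ n. -/
theorem euclidean_distance_matrix_mrank_lower {n : ℕ}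
    (a : Fin n → ℝ) (ha : Function.Injective a)
    (M : Matrix (Fin n) (Fin n) ℝ) (hM : ∀ i j, M i j = (a j - a i) ^ 2) :
    Real.logb 2 n ≤ (mrank M : ℝ) := by
  classical
  have hne : {r : ℕ | ∃ u : Fin r → Fin n → ℝ, ∃ v : Fin r → Fin n → ℝ,
      (∀ k s, 0 ≤ u k s) ∧ (∀ k t, 0 ≤ v k t) ∧
      ∀ s t, M s t = ∑ k, u k s * v k t}.Nonempty := by
    refine ⟨n, fun k s => if s = k then 1 else 0, fun k t => M k t, ?_, ?_, ?_⟩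
    · intro k s; dsimp only; split <;> norm_num
    · intro k t; dsimp only; rw [hM]; positivity
    · intro s t
      rw [Finset.sum_eq_single s]
      · simp
      · intro b _ hb; simp [Ne.symm hb]
      · simp
  obtain ⟨u, v, hu, hv, hsum⟩ : mrank M ∈ _ := Nat.sInf_mem hne
  have hinj : Function.Injective
      (fun i : Fin n => fun k : Fin (mrank M) => decide (0 < u k i)) := by
    intro i j hij
    by_contra hij'
    have haij : a j - a i ≠ 0 := sub_ne_zero.mpr fun h => hij' ((ha h).symm)
    have hMij : 0 < M i j := by rw [hM]; positivity
    rw [hsum i j] at hMij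
    obtain ⟨k, -, hk⟩ := Finset.exists_ne_zero_of_sum_ne_zero hMij.ne'
    have hui : 0 < u k i := (hu k i).lt_of_ne (Ne.symm (left_ne_zero_of_mul hk))
    have hvj : 0 < v k j := (hv k j).lt_of_ne (Ne.symm (right_ne_zero_of_mul hk))
    have huj : 0 < u k j := by
      have := congrFun hij k
      simp only [decide_eq_decide] at this
      exact this.mp hui
    have hMjj : (∑ k, u k j * v k j) = 0 := by
      rw [← hsum j j, hM]; ring
    have := (Finset.sum_eq_zero_iff_of_nonneg
      (fun k _ => mul_nonneg (hu k j) (hv k j))).mp hMjj k (Finset.mem_univ k)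
    exact absurd this (mul_pos huj hvj).ne'
  have hcard : n ≤ 2 ^ mrank M := by
    have := Fintype.card_le_of_injective _ hinj
    simpa using this
  rcases Nat.eq_zero_or_pos n with h0 | hpos
  · subst h0; simp [Real.logb]
  · have h2 : (n : ℝ) ≤ (2 : ℝ) ^ (mrank M : ℝ) := by
      rw [Real.rpow_natCast]
      exact_mod_cast hcard
    calc Real.logb 2 n ≤ Real.logb 2 ((2:ℝ) ^ (mrank M : ℝ)) :=
          Real.logb_le_logb_of_le one_lt_two (by exact_mod_cast hpos) h2
      _ = (mrank M : ℝ) := Real.logb_rpow (by norm_num) (by norm_num)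
end

section
/- Let a_i = i for i = 1, …, n and let M be the n×n matrix with M_{ij} = (j − i)^2. Then the nonnegative rank of M is at most 2 log₂ n + 2. -/
lemma hrubes_key (L : ℕ) : ∃ (r : ℕ) (u v : Fin r → ℕ → ℝ), r ≤ 2 * L ∧
    (∀ t x, 0 ≤ u t x) ∧ (∀ t x, 0 ≤ v t x) ∧
    ∀ i j : ℕ, i < 2 ^ L → j < 2 ^ L → ((i : ℝ) - j) ^ 2 = ∑ t, u t i * v t j := by
  induction L with
  | zero =>
    refine ⟨0, ![], ![], le_refl _, fun t => t.elim0, fun t => t.elim0, ?_⟩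
    intro i j hi hj
    interval_cases i
    interval_cases j
    simp
  | succ L ih =>
    obtain ⟨r, u, v, hr, hu, hv, hid⟩ := ih
    set m := 2 ^ L with hm
    have hm1 : 1 ≤ m := Nat.one_le_two_pow
    set σ : ℕ → ℕ := fun x => min x (2 * m - 1 - x) with hσ
    set w : ℕ → ℝ := fun x => max (2 * (x : ℝ) - (2 * (m : ℝ) - 1)) 0 with hw
    set z : ℕ → ℝ := fun x => max ((2 * (m : ℝ) - 1) - 2 * (x : ℝ)) 0 with hz
    have hσlt : ∀ x, x < 2 * m → σ x < m := by
      intro x hx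
      simp only [hσ]
      omega
    refine ⟨r + 2, Fin.snoc (Fin.snoc (fun t x => u t (σ x)) w) z,
      Fin.snoc (Fin.snoc (fun t x => v t (σ x)) z) w, by omega, ?_, ?_, ?_⟩
    · intro t x
      refine Fin.lastCases ?_ (fun t => ?_) t
      · rw [Fin.snoc_last]
        exact le_max_right _ _
      · rw [Fin.snoc_castSucc]
        refine Fin.lastCases ?_ (fun t => ?_) t
        · rw [Fin.snoc_last]
          exact le_max_right _ _
        · rw [Fin.snoc_castSucc]
          exact hu t _
    · intro t x
      refine Fin.lastCases ?_ (fun t => ?_) t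
      · rw [Fin.snoc_last]
        exact le_max_right _ _
      · rw [Fin.snoc_castSucc]
        refine Fin.lastCases ?_ (fun t => ?_) t
        · rw [Fin.snoc_last]
          exact le_max_right _ _
        · rw [Fin.snoc_castSucc]
          exact hv t _
    · intro i j hi hj
      have hi' : i < 2 * m := by
        have : (2:ℕ) ^ (L+1) = 2 * m := by rw [hm]; ring
        omega
      have hj' : j < 2 * m := by
        have : (2:ℕ) ^ (L+1) = 2 * m := by rw [hm]; ring
        omega
      rw [Fin.sum_univ_castSucc]
      simp only [Fin.snoc_last, Fin.snoc_castSucc]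
      rw [Fin.sum_univ_castSucc]
      simp only [Fin.snoc_last, Fin.snoc_castSucc]
      rw [← hid (σ i) (σ j) (hσlt i hi') (hσlt j hj')]
      -- now pure identity
      rcases lt_or_ge i m with hil | hig <;> rcases lt_or_ge j m with hjl | hjg
      · -- both small
        have h1 : σ i = i := by simp only [hσ]; omega
        have h2 : σ j = j := by simp only [hσ]; omega
        have h3 : w i = 0 := by
          rw [hw]
          apply max_eq_right
          have : (i:ℝ) + 1 ≤ m := by exact_mod_cast hil
          linarith
        have h4 : w j = 0 := by
          rw [hw]
          apply max_eq_right
          have : (j:ℝ) + 1 ≤ m := by exact_mod_cast hjl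
          linarith
        rw [h1, h2, h3, h4]
        ring
      · -- i small, j big
        have h1 : σ i = i := by simp only [hσ]; omega
        have h2 : (σ j : ℝ) = 2 * (m:ℝ) - 1 - j := by
          have : σ j = 2 * m - 1 - j := by simp only [hσ]; omega
          rw [this, Nat.cast_sub (by omega), Nat.cast_sub (by omega)]
          push_cast
          ring
        have h3 : w i = 0 := by
          rw [hw]; apply max_eq_right
          have : (i:ℝ) + 1 ≤ m := by exact_mod_cast hil
          linarith
        have h4 : z j = 0 := by
          rw [hz]; apply max_eq_right
          have : (m:ℝ) ≤ j := by exact_mod_cast hjg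
          linarith
        have h5 : z i = 2 * (m:ℝ) - 1 - 2 * i := by
          rw [hz]; apply max_eq_left
          have : (i:ℝ) + 1 ≤ m := by exact_mod_cast hil
          linarith
        have h6 : w j = 2 * (j:ℝ) - (2 * (m:ℝ) - 1) := by
          rw [hw]; apply max_eq_left
          have : (m:ℝ) ≤ j := by exact_mod_cast hjg
          linarith
        rw [h1, h2, h3, h4, h5, h6]
        ring
      · -- i big, j small
        have h1 : (σ i : ℝ) = 2 * (m:ℝ) - 1 - i := by
          have : σ i = 2 * m - 1 - i := by simp only [hσ]; omega
          rw [this, Nat.cast_sub (by omega), Nat.cast_sub (by omega)]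
          push_cast
          ring
        have h2 : σ j = j := by simp only [hσ]; omega
        have h3 : z i = 0 := by
          rw [hz]; apply max_eq_right
          have : (m:ℝ) ≤ i := by exact_mod_cast hig
          linarith
        have h4 : w j = 0 := by
          rw [hw]; apply max_eq_right
          have : (j:ℝ) + 1 ≤ m := by exact_mod_cast hjl
          linarith
        have h5 : w i = 2 * (i:ℝ) - (2 * (m:ℝ) - 1) := by
          rw [hw]; apply max_eq_left
          have : (m:ℝ) ≤ i := by exact_mod_cast hig
          linarith
        have h6 : z j = 2 * (m:ℝ) - 1 - 2 * j := by
          rw [hz]; apply max_eq_left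
          have : (j:ℝ) + 1 ≤ m := by exact_mod_cast hjl
          linarith
        rw [h1, h2, h3, h4, h5, h6]
        ring
      · -- both big
        have h1 : (σ i : ℝ) = 2 * (m:ℝ) - 1 - i := by
          have : σ i = 2 * m - 1 - i := by simp only [hσ]; omega
          rw [this, Nat.cast_sub (by omega), Nat.cast_sub (by omega)]
          push_cast
          ring
        have h2 : (σ j : ℝ) = 2 * (m:ℝ) - 1 - j := by
          have : σ j = 2 * m - 1 - j := by simp only [hσ]; omega
          rw [this, Nat.cast_sub (by omega), Nat.cast_sub (by omega)]
          push_cast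
          ring
        have h3 : z i = 0 := by
          rw [hz]; apply max_eq_right
          have : (m:ℝ) ≤ i := by exact_mod_cast hig
          linarith
        have h4 : z j = 0 := by
          rw [hz]; apply max_eq_right
          have : (m:ℝ) ≤ j := by exact_mod_cast hjg
          linarith
        rw [h1, h2, h3, h4]
        ring



/-- For aᵢ = i, the matrix M with Mᵢⱼ = (j - i)² has nonnegative rank at most 2·log₂ n + 2. -/
theorem hrubes_upper_bound {n : ℕ}
    (M : Matrix (Fin n) (Fin n) ℝ)
    (hM : ∀ i j, M i j = (((j : ℕ) : ℝ) - ((i : ℕ) : ℝ)) ^ 2) :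
    (mrank M : ℝ) ≤ 2 * Real.logb 2 n + 2 := by
  set L := Nat.clog 2 n with hL
  obtain ⟨r, u, v, hr, hu, hv, hid⟩ := hrubes_key L
  have hn : n ≤ 2 ^ L := Nat.le_pow_clog one_lt_two n
  have hmem : r ∈ {r : ℕ | ∃ u : Fin r → Fin n → ℝ, ∃ v : Fin r → Fin n → ℝ,
      (∀ k s, 0 ≤ u k s) ∧ (∀ k t, 0 ≤ v k t) ∧ ∀ s t, M s t = ∑ k, u k s * v k t} := by
    refine ⟨fun k s => v k (s : ℕ), fun k t => u k (t : ℕ),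
      fun k s => hv k _, fun k t => hu k _, ?_⟩
    intro s t
    rw [hM, hid (t : ℕ) (s : ℕ) (lt_of_lt_of_le t.isLt hn) (lt_of_lt_of_le s.isLt hn)]
    exact Finset.sum_congr rfl (fun k _ => mul_comm _ _)
  have hle : mrank M ≤ r := Nat.sInf_le hmem
  have hLlog : (L : ℝ) ≤ Real.logb 2 n + 1 := by
    rcases le_or_gt n 1 with h1 | h1
    · interval_cases n
      · simp [hL]
      · simp [hL]
    · have hk1 : 1 ≤ L := by
        rw [hL]
        exact Nat.clog_pos one_lt_two h1
      have hlt : 2 ^ (L - 1) < n := by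
        have := Nat.pow_pred_clog_lt_self one_lt_two h1
        rwa [← hL] at this
      have hcast : ((2:ℝ)) ^ (L - 1) ≤ (n : ℝ) := by
        exact_mod_cast hlt.le
      have hlogle : Real.logb 2 ((2:ℝ) ^ (L - 1)) ≤ Real.logb 2 n :=
        Real.logb_le_logb_of_le one_lt_two (by positivity) hcast
      rw [Real.logb_pow, Real.logb_self_eq_one one_lt_two] at hlogle
      have : ((L - 1 : ℕ) : ℝ) = (L : ℝ) - 1 := by
        rw [Nat.cast_sub hk1]
        norm_num
      rw [this] at hlogle
      linarith [hlogle]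
  have h1 : (mrank M : ℝ) ≤ r := by exact_mod_cast hle
  have h2 : (r : ℝ) ≤ 2 * L := by exact_mod_cast hr
  linarith
end

section
/- Let d ≥ 2 and n ≥ 1, and define the tensor M : [n]^d → {0,1} by M(i_1,…,i_d) = 1 if and only if i_1 + ⋯ + i_d is divisible by n. Then the nonnegative (monotone) tensor rank of M equals n^{d−1}. -/
/-- The nonnegative (monotone) tensor rank of a d-dimensional tensor on [n]^d. -/
noncomputable def tmrank (d n : ℕ) (M : (Fin d → Fin n) → ℝ) : ℕ :=
  sInf {r : ℕ | ∃ v : Fin r → Fin d → Fin n → ℝ,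
    (∀ k j x, 0 ≤ v k j x) ∧
    ∀ i : Fin d → Fin n, M i = ∑ k, ∏ j, v k j (i j)}

lemma exists_lastVal {n : ℕ} (hn : 1 ≤ n) (s : ℕ) :
    ∃ x : Fin n, n ∣ ((x : ℕ) + 1) + s := by
  have hmod : s % n < n := Nat.mod_lt _ hn
  have hdm : n * (s / n) + s % n = s := Nat.div_add_mod s n
  refine ⟨⟨n - 1 - s % n, by omega⟩, 1 + s / n, ?_⟩
  have h2 : n * (1 + s / n) = n + n * (s / n) := by ring
  simp only [Fin.val_mk]
  omega

lemma fin_dvd_unique {n s : ℕ} {x y : Fin n}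
    (hx : n ∣ ((x : ℕ) + 1) + s) (hy : n ∣ ((y : ℕ) + 1) + s) : x = y := by
  have h : ∀ a b : Fin n, (a : ℕ) ≤ b → n ∣ ((a : ℕ) + 1) + s →
      n ∣ ((b : ℕ) + 1) + s → a = b := by
    intro a b hab ha hb
    have h1 : n ∣ (((b : ℕ) + 1) + s) - (((a : ℕ) + 1) + s) := Nat.dvd_sub hb ha
    have h2 : (((b : ℕ) + 1) + s) - (((a : ℕ) + 1) + s) = (b : ℕ) - (a : ℕ) := by omega
    rw [h2] at h1
    have h3 := Nat.eq_zero_of_dvd_of_lt h1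
      (lt_of_le_of_lt (Nat.sub_le _ _) b.isLt)
    exact Fin.ext (by omega)
  rcases le_total (x : ℕ) (y : ℕ) with hl | hl
  · exact h x y hl hx hy
  · exact (h y x hl hy hx).symm

noncomputable def lastVal {n : ℕ} (hn : 1 ≤ n) (s : ℕ) : Fin n :=
  (exists_lastVal hn s).choose

lemma lastVal_spec {n : ℕ} (hn : 1 ≤ n) (s : ℕ) :
    n ∣ ((lastVal hn s : ℕ) + 1) + s :=
  (exists_lastVal hn s).choose_spec

noncomputable def suppEquiv {n e : ℕ} (hn : 1 ≤ n) :
    {i : Fin (e+1) → Fin n // n ∣ ∑ j, ((i j : ℕ) + 1)} ≃ (Fin e → Fin n) where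
  toFun i j := i.1 j.castSucc
  invFun f := ⟨Fin.snoc f (lastVal hn (∑ j, ((f j : ℕ) + 1))), by
    rw [Fin.sum_univ_castSucc]
    simp only [Fin.snoc_castSucc, Fin.snoc_last]
    have h := lastVal_spec hn (∑ j, ((f j : ℕ) + 1))
    rwa [Nat.add_comm] at h⟩
  left_inv i := by
    apply Subtype.ext
    funext j
    induction j using Fin.lastCases with
    | cast j => simp [Fin.snoc_castSucc]
    | last =>
      simp only [Fin.snoc_last]
      apply fin_dvd_unique (lastVal_spec hn _)
      have h := i.2
      rw [Fin.sum_univ_castSucc] at h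
      rwa [Nat.add_comm] at h
  right_inv f := by funext j; simp [Fin.snoc_castSucc]

lemma upper_mem {n e : ℕ} (hn : 1 ≤ n)
    (M : (Fin (e+1) → Fin n) → ℝ)
    (hM : ∀ i, M i = if n ∣ ∑ j, ((i j : ℕ) + 1) then 1 else 0) :
    ∃ v : Fin (n ^ e) → Fin (e+1) → Fin n → ℝ,
      (∀ k j x, 0 ≤ v k j x) ∧
      ∀ i : Fin (e+1) → Fin n, M i = ∑ k, ∏ j, v k j (i j) := by
  classical
  have hcard : Fintype.card (Fin e → Fin n) = n ^ e := by simp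
  let E : (Fin e → Fin n) ≃ Fin (n ^ e) := Fintype.equivFinOfCardEq hcard
  let w : (Fin e → Fin n) → Fin (e+1) → Fin n → ℝ :=
    fun f => Fin.snoc (fun j x => if x = f j then 1 else 0)
      (fun x => if n ∣ ((x : ℕ) + 1) + ∑ j, ((f j : ℕ) + 1) then 1 else 0)
  have hw : ∀ (f : Fin e → Fin n) (i : Fin (e+1) → Fin n), (∏ j, w f j (i j)) =
      (if (fun j => i (Fin.castSucc j)) = f then (1:ℝ) else 0) *
      (if n ∣ ((i (Fin.last e) : ℕ) + 1) + ∑ j, ((f j : ℕ) + 1) then 1 else 0) := by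
    intro f i
    rw [Fin.prod_univ_castSucc]
    simp only [w, Fin.snoc_castSucc, Fin.snoc_last]
    congr 1
    rw [Finset.prod_boole]
    congr 1
    simp only [eq_iff_iff]
    constructor
    · intro h; funext j; exact h j (Finset.mem_univ j)
    · intro h j _; exact congrFun h j
  refine ⟨fun k => w (E.symm k), ?_, ?_⟩
  · intro k j x
    induction j using Fin.lastCases with
    | last => simp only [w, Fin.snoc_last]; split <;> norm_num
    | cast j => simp only [w, Fin.snoc_castSucc]; split <;> norm_num
  · intro i
    rw [hM]
    rw [show (∑ k, ∏ j, w (E.symm k) j (i j)) = ∑ f, ∏ j, w f j (i j) from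
      Equiv.sum_comp E.symm (fun f => ∏ j, w f j (i j))]
    simp only [hw]
    simp only [ite_mul, one_mul, zero_mul]
    rw [Finset.sum_ite_eq Finset.univ (fun j => i (Fin.castSucc j))
      (fun f => if n ∣ ((i (Fin.last e) : ℕ) + 1) + ∑ j, ((f j : ℕ) + 1) then (1:ℝ) else 0)]
    simp only [Finset.mem_univ, if_true]
    rw [Fin.sum_univ_castSucc]
    rw [Nat.add_comm]
  -- goal: if dvd then 1 else 0 = one_mul ... handled?

lemma lower_bound {n e r : ℕ} (hn : 1 ≤ n)
    (M : (Fin (e+1) → Fin n) → ℝ)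
    (hM : ∀ i, M i = if n ∣ ∑ j, ((i j : ℕ) + 1) then 1 else 0)
    (v : Fin r → Fin (e+1) → Fin n → ℝ)
    (hv : ∀ k j x, 0 ≤ v k j x)
    (hsum : ∀ i, M i = ∑ k, ∏ j, v k j (i j)) :
    n ^ e ≤ r := by
  classical
  have hcard : Nat.card {i : Fin (e+1) → Fin n // n ∣ ∑ j, ((i j : ℕ) + 1)} = n ^ e := by
    rw [Nat.card_congr (suppEquiv hn)]
    simp [Nat.card_fun]
  have key : ∀ i : {i : Fin (e+1) → Fin n // n ∣ ∑ j, ((i j : ℕ) + 1)},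
      ∃ k, ∀ j, 0 < v k j (i.1 j) := by
    rintro ⟨i, hi⟩
    have h1 : (1 : ℝ) = ∑ k, ∏ j, v k j (i j) := by
      rw [← hsum i, hM i, if_pos hi]
    have h2 : ∃ k ∈ Finset.univ, (∏ j, v k j (i j)) ≠ 0 :=
      Finset.exists_ne_zero_of_sum_ne_zero (by rw [← h1]; norm_num)
    obtain ⟨k, _, hk⟩ := h2
    refine ⟨k, fun j => ?_⟩
    have h3 := Finset.prod_ne_zero_iff.mp hk j (Finset.mem_univ j)
    exact lt_of_le_of_ne (hv k j _) (Ne.symm h3)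
  choose φ hφ using key
  have hinj : Function.Injective φ := by
    intro a b hab
    by_contra hne
    obtain ⟨j0, hj0⟩ : ∃ j0, a.1 j0 ≠ b.1 j0 := by
      by_contra h; push_neg at h; exact hne (Subtype.ext (funext h))
    set i'' := Function.update a.1 j0 (b.1 j0) with hi''
    have hpos : 0 < ∏ j, v (φ a) j (i'' j) := by
      apply Finset.prod_pos
      intro j _
      by_cases hj : j = j0
      · subst hj
        rw [hi'', Function.update_self, hab]
        exact hφ b j
      · rw [hi'', Function.update_of_ne hj]
        exact hφ a j
    have hMpos : 0 < M i'' := by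
      rw [hsum]
      refine lt_of_lt_of_le hpos ?_
      exact Finset.single_le_sum (f := fun k => ∏ j, v k j (i'' j))
        (fun k _ => Finset.prod_nonneg fun j _ => hv k j _) (Finset.mem_univ (φ a))
    have hdvd'' : n ∣ ∑ j, ((i'' j : ℕ) + 1) := by
      by_contra h
      rw [hM i'', if_neg h] at hMpos
      exact lt_irrefl _ hMpos
    have hs1 : ∑ j, ((a.1 j : ℕ) + 1) =
        ((a.1 j0 : ℕ) + 1) + ∑ j ∈ Finset.univ.erase j0, ((a.1 j : ℕ) + 1) :=
      (Finset.add_sum_erase _ _ (Finset.mem_univ j0)).symm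
    have hs2 : ∑ j, ((i'' j : ℕ) + 1) =
        ((b.1 j0 : ℕ) + 1) + ∑ j ∈ Finset.univ.erase j0, ((a.1 j : ℕ) + 1) := by
      rw [← Finset.add_sum_erase _ _ (Finset.mem_univ j0)]
      congr 1
      · rw [hi'', Function.update_self]
      · apply Finset.sum_congr rfl
        intro j hj
        rw [hi'', Function.update_of_ne (Finset.ne_of_mem_erase hj)]
    have ha := a.2
    rw [hs1] at ha
    rw [hs2] at hdvd''
    exact hj0 (fin_dvd_unique ha hdvd'')
  calc n ^ e = Nat.card {i : Fin (e+1) → Fin n // n ∣ ∑ j, ((i j : ℕ) + 1)} := hcard.symm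
    _ ≤ Nat.card (Fin r) := Nat.card_le_card_of_injective φ hinj
    _ = r := by simp

/-- The divisibility tensor M(i₁,…,i_d) = 1 iff n ∣ i₁ + ⋯ + i_d has monotone
tensor rank exactly n^(d-1). -/
theorem divisibility_tensor_mrank {d n : ℕ} (hd : 2 ≤ d) (hn : 1 ≤ n)
    (M : (Fin d → Fin n) → ℝ)
    (hM : ∀ i, M i = if n ∣ ∑ j, ((i j : ℕ) + 1) then 1 else 0) :
    tmrank d n M = n ^ (d - 1) := by
  obtain ⟨e, rfl⟩ : ∃ e, d = e + 1 := ⟨d - 1, by omega⟩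
  simp only [Nat.add_sub_cancel]
  rw [tmrank]
  have hmem := upper_mem hn M hM
  apply le_antisymm
  · exact Nat.sInf_le hmem
  · refine le_csInf ⟨n ^ e, hmem⟩ ?_
    rintro r ⟨v, hv, hsum⟩
    exact lower_bound hn M hM v hv hsum
end

section
/- Let Z be a random variable on a finite sample space Ω, and let X, Y be random variables with values in a finite set S such that X and Y are conditionally independent given Z. Let P be the S×S matrix with P_{xy} = Prob(X = x, Y = y). Then the nonnegative rank of P is at most |Ω|. -/
/-- If X, Y (with values in a finite set S) are conditionally independent given a
random variable Z with values in a finite set Ω — all on a finite probability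
space (T, w) — then the joint-distribution matrix P_{xy} = Prob(X = x, Y = y)
has nonnegative rank at most |Ω|.  Conditional independence is expressed in the
cross-multiplied form
Prob(X=x,Y=y,Z=z)·Prob(Z=z) = Prob(X=x,Z=z)·Prob(Y=y,Z=z). -/
theorem mrank_le_card_of_cond_indep {T Ω S : Type*}
    [Fintype T] [Fintype Ω] [Fintype S] [DecidableEq Ω] [DecidableEq S]
    (w : T → ℝ) (hw : ∀ t, 0 ≤ w t) (hw1 : ∑ t, w t = 1)
    (X Y : T → S) (Z : T → Ω)
    (hci : ∀ z x y,
      (∑ t ∈ Finset.univ.filter (fun t => X t = x ∧ Y t = y ∧ Z t = z), w t) *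
        (∑ t ∈ Finset.univ.filter (fun t => Z t = z), w t) =
      (∑ t ∈ Finset.univ.filter (fun t => X t = x ∧ Z t = z), w t) *
        (∑ t ∈ Finset.univ.filter (fun t => Y t = y ∧ Z t = z), w t))
    (P : Matrix S S ℝ)
    (hP : ∀ x y, P x y = ∑ t ∈ Finset.univ.filter (fun t => X t = x ∧ Y t = y), w t) :
    mrank P ≤ Fintype.card Ω := by
  classical
  set pz : Ω → ℝ := fun z => ∑ t ∈ Finset.univ.filter (fun t => Z t = z), w t with hpz
  set u : Ω → S → ℝ := fun z x => ∑ t ∈ Finset.univ.filter (fun t => X t = x ∧ Z t = z), w t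
    with hu
  set v : Ω → S → ℝ := fun z y => if pz z = 0 then 0 else
    (∑ t ∈ Finset.univ.filter (fun t => Y t = y ∧ Z t = z), w t) / pz z with hv
  have hpz0 : ∀ z, 0 ≤ pz z := fun z => Finset.sum_nonneg fun t _ => hw t
  have key : ∀ x y z, u z x * v z y =
      ∑ t ∈ Finset.univ.filter (fun t => X t = x ∧ Y t = y ∧ Z t = z), w t := by
    intro x y z
    by_cases h : pz z = 0
    · have hzero : ∑ t ∈ Finset.univ.filter (fun t => X t = x ∧ Y t = y ∧ Z t = z), w t = 0 := by
        have hle : ∑ t ∈ Finset.univ.filter (fun t => X t = x ∧ Y t = y ∧ Z t = z), w t ≤ pz z := by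
          apply Finset.sum_le_sum_of_subset_of_nonneg
          · intro t ht
            simp only [Finset.mem_filter] at ht ⊢
            exact ⟨ht.1, ht.2.2.2⟩
          · intro t _ _; exact hw t
        have hge : 0 ≤ ∑ t ∈ Finset.univ.filter (fun t => X t = x ∧ Y t = y ∧ Z t = z), w t :=
          Finset.sum_nonneg fun t _ => hw t
        linarith [h ▸ hle]
      simp [hv, h, hzero]
    · have := hci z x y
      simp only [hv, if_neg h]
      field_simp
      linarith [this]
  have e := (Fintype.equivFin Ω).symm
  refine Nat.sInf_le ?_
  refine ⟨fun k => u (e k), fun k => v (e k), ?_, ?_, ?_⟩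
  · intro k x; exact Finset.sum_nonneg fun t _ => hw t
  · intro k y
    by_cases h : pz (e k) = 0
    · simp [hv, h]
    · simp only [hv, if_neg h]
      exact div_nonneg (Finset.sum_nonneg fun t _ => hw t) (hpz0 _)
  · intro x y
    rw [hP, Equiv.sum_comp e (fun z => u z x * v z y)]
    rw [Finset.sum_congr rfl (fun z _ => key x y z)]
    have hsplit : ∀ z, Finset.univ.filter (fun t => X t = x ∧ Y t = y ∧ Z t = z)
        = (Finset.univ.filter (fun t => X t = x ∧ Y t = y)).filter (fun t => Z t = z) := by
      intro z; ext t; simp [Finset.mem_filter, and_assoc]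
    simp_rw [hsplit]
    exact (Finset.sum_fiberwise _ Z w).symm
end

section
/- Let c_1, …, c_N be distinct nonnegative reals and let P be the N×N matrix with P_{xy} = (c_y − c_x)². Then any representation of P as a convex-combination mixture P = Σ_{z∈Ω} p_z · u_z v_zᵀ with probability vector (p_z), and u_z, v_z entrywise-nonnegative probability vectors, requires |Ω| ≥ log₂ N. -/
/-- For distinct nonnegative reals c₁,…,c_N and P_{xy} = (c_y − c_x)², any mixture
representation P = Σ_z p_z · u_z v_zᵀ with (p_z) a probability vector and u_z, v_z
nonnegative probability vectors requires |Ω| ≥ log₂ N. -/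
theorem mixture_size_lower_bound {N : ℕ}
    (c : Fin N → ℝ) (hc : Function.Injective c) (hcnn : ∀ x, 0 ≤ c x)
    (P : Matrix (Fin N) (Fin N) ℝ) (hPdef : ∀ x y, P x y = (c y - c x) ^ 2)
    {Ω : Type*} [Fintype Ω]
    (p : Ω → ℝ) (u v : Ω → Fin N → ℝ)
    (hp : ∀ z, 0 ≤ p z) (hp1 : ∑ z, p z = 1)
    (hu : ∀ z x, 0 ≤ u z x) (hu1 : ∀ z, ∑ x, u z x = 1)
    (hv : ∀ z y, 0 ≤ v z y) (hv1 : ∀ z, ∑ y, v z y = 1)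
    (hrep : ∀ x y, P x y = ∑ z, p z * (u z x * v z y)) :
    Real.logb 2 N ≤ (Fintype.card Ω : ℝ) := by
  classical
  rcases Nat.eq_zero_or_pos N with hN | hN
  · subst hN
    simp [Real.logb]
  -- terms of each diagonal sum vanish
  have hterm : ∀ x z, p z * (u z x * v z x) = 0 := by
    intro x z
    have hsum : ∑ z, p z * (u z x * v z x) = 0 := by
      rw [← hrep x x, hPdef]; ring
    have hnn : ∀ w ∈ Finset.univ, (0:ℝ) ≤ p w * (u w x * v w x) := by
      intro w _
      exact mul_nonneg (hp w) (mul_nonneg (hu w x) (hv w x))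
    exact (Finset.sum_eq_zero_iff_of_nonneg hnn).mp hsum z (Finset.mem_univ z)
  -- injective map into Finset Ω
  set f : Fin N → Finset Ω := fun x => Finset.univ.filter (fun z => 0 < p z ∧ 0 < u z x) with hf
  have hfinj : Function.Injective f := by
    intro x y hxy
    by_contra hne
    have hpos : 0 < P x y := by
      rw [hPdef]
      have : c y - c x ≠ 0 := sub_ne_zero.mpr (fun h => hne (hc h).symm)
      positivity
    rw [hrep] at hpos
    obtain ⟨z, _, hz⟩ := Finset.exists_lt_of_sum_lt (by simpa using hpos :
      ∑ _z : Ω, (0:ℝ) < ∑ z, p z * (u z x * v z y))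
    have hpz : 0 < p z := by
      rcases (hp z).lt_or_eq with h | h
      · exact h
      · exfalso; rw [← h] at hz; simp at hz
    have huzx : 0 < u z x := by
      rcases (hu z x).lt_or_eq with h | h
      · exact h
      · exfalso; rw [← h] at hz; simp at hz
    have hvzy : 0 < v z y := by
      rcases (hv z y).lt_or_eq with h | h
      · exact h
      · exfalso; rw [← h] at hz; simp at hz
    have hzx : z ∈ f x := by simp [hf, hpz, huzx]
    have huzy : 0 < u z y := by
      rw [hxy] at hzx
      simp [hf] at hzx
      exact hzx.2
    have := hterm y z
    have : p z * (u z y * v z y) > 0 := by positivity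
    linarith [hterm y z]
  have hcard : N ≤ 2 ^ Fintype.card Ω := by
    have := Fintype.card_le_of_injective f hfinj
    simpa using this
  have h2 : (N : ℝ) ≤ 2 ^ (Fintype.card Ω : ℕ) := by exact_mod_cast hcard
  calc Real.logb 2 N ≤ Real.logb 2 (2 ^ (Fintype.card Ω : ℕ)) := by
        exact Real.logb_le_logb_of_le (b := 2) (by norm_num) (by exact_mod_cast hN) h2
    _ = (Fintype.card Ω : ℝ) := by
        rw [Real.logb_pow, Real.logb_self_eq_one (by norm_num)]
        ring
end
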